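/- For every integer k ≥ 1 and every real number x, the k-th derivative of the hyperbolic tangent satisfies |tanh^{(k)}(x)| ≤ 2^{k+1} · k!. -/

import Mathlib

open Polynomial Finset

lemma tanh_hasDerivAt (x : ℝ) :
    HasDerivAt Real.tanh (1 - Real.tanh x ^ 2) x := by
  have hc : Real.cosh x ≠ 0 := (Real.cosh_pos x).ne'
  have h : HasDerivAt Real.tanh
      ((Real.cosh x * Real.cosh x - Real.sinh x * Real.sinh x) / Real.cosh x ^ 2) x := by
    have h0 := (Real.hasDerivAt_sinh x).div (Real.hasDerivAt_cosh x) hc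
    have h1 : Real.tanh = fun y => Real.sinh y / Real.cosh y :=
      funext fun y => Real.tanh_eq_sinh_div_cosh y
    rw [h1]
    exact h0
  convert h using 1
  rw [Real.tanh_eq_sinh_div_cosh]
  have hsq : Real.cosh x ^ 2 = Real.sinh x ^ 2 + 1 := Real.cosh_sq x
  field_simp

lemma abs_tanh_le_one (x : ℝ) : |Real.tanh x| ≤ 1 := by
  rw [Real.tanh_eq_sinh_div_cosh, abs_div, abs_of_pos (Real.cosh_pos x)]
  rw [div_le_one (Real.cosh_pos x)]
  rw [abs_le]
  have h1 := Real.exp_pos x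
  have h2 := Real.exp_pos (-x)
  rw [Real.sinh_eq, Real.cosh_eq]
  constructor <;> nlinarith

lemma sum_abs_coeff_ext (p : Polynomial ℝ) {n m : ℕ} (hn : p.natDegree < n) (hnm : n ≤ m) :
    ∑ i ∈ range m, |p.coeff i| = ∑ i ∈ range n, |p.coeff i| := by
  refine (Finset.sum_subset (Finset.range_subset_range.2 hnm) ?_).symm
  intro i _ hi
  rw [Finset.mem_range, not_lt] at hi
  rw [p.coeff_eq_zero_of_natDegree_lt (lt_of_lt_of_le hn hi), abs_zero]

lemma tanh_poly (k : ℕ) : ∃ p : Polynomial ℝ, p.natDegree ≤ k + 1 ∧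
    (∑ i ∈ range (k + 2), |p.coeff i|) ≤ 2 ^ k * (k.factorial : ℝ) ∧
    ∀ x, iteratedDeriv k Real.tanh x = p.eval (Real.tanh x) := by
  induction k with
  | zero =>
    refine ⟨X, by simp, ?_, fun x => by simp⟩
    rw [show (0 : ℕ) + 2 = 2 by rfl, Finset.sum_range_succ, Finset.sum_range_one]
    norm_num
  | succ k ih =>
    obtain ⟨p, hdeg, hsum, heval⟩ := ih
    refine ⟨p.derivative - p.derivative * X ^ 2, ?_, ?_, ?_⟩
    · -- degree bound
      refine le_trans (natDegree_sub_le _ _) (max_le ?_ ?_)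
      · exact le_trans (p.natDegree_derivative_le) (by omega)
      · calc (p.derivative * X ^ 2).natDegree
            ≤ p.derivative.natDegree + (X ^ 2 : Polynomial ℝ).natDegree := natDegree_mul_le
          _ ≤ k + 2 := by
              rw [natDegree_X_pow]
              have := p.natDegree_derivative_le
              omega
    · -- coefficient sum bound
      have hd : p.derivative.natDegree ≤ k := by
        have := p.natDegree_derivative_le
        omega
      have hA : ∑ i ∈ range (k + 3), |p.derivative.coeff i|
          ≤ (k + 1 : ℝ) * ∑ i ∈ range (k + 2), |p.coeff i| := by
        have step : ∀ i ∈ range (k + 3),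
            |p.derivative.coeff i| ≤ (k + 1 : ℝ) * |p.coeff (i + 1)| := by
          intro i _
          rw [coeff_derivative, abs_mul, mul_comm]
          by_cases hi : i ≤ k
          · refine mul_le_mul_of_nonneg_right ?_ (abs_nonneg _)
            rw [abs_of_nonneg (by positivity)]
            have : (i : ℝ) ≤ k := Nat.cast_le.2 hi
            linarith
          · have hz : p.coeff (i + 1) = 0 :=
              p.coeff_eq_zero_of_natDegree_lt (by omega)
            simp [hz]
        calc ∑ i ∈ range (k + 3), |p.derivative.coeff i|
            ≤ ∑ i ∈ range (k + 3), (k + 1 : ℝ) * |p.coeff (i + 1)| :=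
              Finset.sum_le_sum step
          _ = (k + 1 : ℝ) * ∑ i ∈ range (k + 3), |p.coeff (i + 1)| := by
              rw [Finset.mul_sum]
          _ ≤ (k + 1 : ℝ) * ∑ i ∈ range (k + 4), |p.coeff i| := by
              refine mul_le_mul_of_nonneg_left ?_ (by positivity)
              rw [Finset.sum_range_succ' (fun i => |p.coeff i|) (k + 3)]
              have : (0 : ℝ) ≤ |p.coeff 0| := abs_nonneg _
              linarith
          _ = (k + 1 : ℝ) * ∑ i ∈ range (k + 2), |p.coeff i| := by
              rw [sum_abs_coeff_ext p (n := k + 2) (m := k + 4) (by omega) (by omega)]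
      have hB : ∑ i ∈ range (k + 3), |(p.derivative * X ^ 2).coeff i|
          ≤ ∑ i ∈ range (k + 3), |p.derivative.coeff i| := by
        have hco : ∀ i, (p.derivative * X ^ 2).coeff i
            = if 2 ≤ i then p.derivative.coeff (i - 2) else 0 := by
          intro i; exact coeff_mul_X_pow' _ 2 i
        calc ∑ i ∈ range (k + 3), |(p.derivative * X ^ 2).coeff i|
            = (∑ i ∈ range (k + 1),
                |(p.derivative * X ^ 2).coeff (i + 1 + 1)|)
              + |(p.derivative * X ^ 2).coeff 1|
              + |(p.derivative * X ^ 2).coeff 0| := by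
              rw [show k + 3 = k + 2 + 1 by omega, Finset.sum_range_succ',
                show k + 2 = k + 1 + 1 by omega, Finset.sum_range_succ']
          _ = ∑ i ∈ range (k + 1), |p.derivative.coeff i| := by
              rw [hco 1, hco 0]
              simp only [show ¬ (2 ≤ 1) by omega, show ¬ (2 ≤ 0) by omega, if_false,
                abs_zero, add_zero]
              refine Finset.sum_congr rfl fun i _ => ?_
              rw [hco (i + 1 + 1)]
              simp
          _ ≤ ∑ i ∈ range (k + 3), |p.derivative.coeff i| := by
              refine Finset.sum_le_sum_of_subset_of_nonneg
                (Finset.range_subset_range.2 (by omega)) ?_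
              intro i _ _; exact abs_nonneg _
      calc ∑ i ∈ range (k + 3), |(p.derivative - p.derivative * X ^ 2).coeff i|
          ≤ ∑ i ∈ range (k + 3),
              (|p.derivative.coeff i| + |(p.derivative * X ^ 2).coeff i|) := by
            refine Finset.sum_le_sum fun i _ => ?_
            rw [coeff_sub]
            exact abs_sub _ _
        _ = (∑ i ∈ range (k + 3), |p.derivative.coeff i|)
            + ∑ i ∈ range (k + 3), |(p.derivative * X ^ 2).coeff i| :=
            Finset.sum_add_distrib
        _ ≤ 2 * ((k + 1 : ℝ) * ∑ i ∈ range (k + 2), |p.coeff i|) := by linarith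
        _ ≤ 2 * ((k + 1 : ℝ) * (2 ^ k * (k.factorial : ℝ))) := by
            refine mul_le_mul_of_nonneg_left ?_ (by norm_num)
            exact mul_le_mul_of_nonneg_left hsum (by positivity)
        _ = 2 ^ (k + 1) * ((k + 1).factorial : ℝ) := by
            rw [Nat.factorial_succ]
            push_cast
            ring
    · -- the evaluation identity
      intro x
      rw [iteratedDeriv_succ]
      have hfun : iteratedDeriv k Real.tanh = fun y => p.eval (Real.tanh y) :=
        funext heval
      rw [hfun]
      have hder : HasDerivAt (fun y => p.eval (Real.tanh y))
          (p.derivative.eval (Real.tanh x) * (1 - Real.tanh x ^ 2)) x :=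
        (p.hasDerivAt (Real.tanh x)).comp x (tanh_hasDerivAt x)
      rw [hder.deriv]
      simp only [eval_sub, eval_mul, eval_pow, eval_X]
      ring

/-- Derivative bounds for the hyperbolic tangent: `|tanh^(k)(x)| ≤ 2^(k+1) * k!`
for every `k ≥ 1` and every real `x`. -/
theorem stmt_12 (k : ℕ) (hk : 1 ≤ k) (x : ℝ) :
    |iteratedDeriv k Real.tanh x| ≤ 2 ^ (k + 1) * (k.factorial : ℝ) := by
  obtain ⟨p, hdeg, hsum, heval⟩ := tanh_poly k
  rw [heval x]
  have ht := abs_tanh_le_one x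
  have heq : p.eval (Real.tanh x)
      = ∑ i ∈ range (k + 2), p.coeff i * Real.tanh x ^ i :=
    p.eval_eq_sum_range' (by omega) _
  rw [heq]
  calc |∑ i ∈ range (k + 2), p.coeff i * Real.tanh x ^ i|
      ≤ ∑ i ∈ range (k + 2), |p.coeff i * Real.tanh x ^ i| :=
        Finset.abs_sum_le_sum_abs _ _
    _ ≤ ∑ i ∈ range (k + 2), |p.coeff i| := by
        refine Finset.sum_le_sum fun i _ => ?_
        rw [abs_mul, abs_pow]
        calc |p.coeff i| * |Real.tanh x| ^ i
            ≤ |p.coeff i| * 1 ^ i := by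
              refine mul_le_mul_of_nonneg_left ?_ (abs_nonneg _)
              exact pow_le_pow_left₀ (abs_nonneg _) ht i
          _ = |p.coeff i| := by rw [one_pow, mul_one]
    _ ≤ 2 ^ k * (k.factorial : ℝ) := hsum
    _ ≤ 2 ^ (k + 1) * (k.factorial : ℝ) := by
        refine mul_le_mul_of_nonneg_right ?_ (by positivity)
        exact pow_le_pow_right₀ (by norm_num) (by omega)
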